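/- Every CA-AG-groupoid is right nuclear square; that is, if a magma S satisfies the left invertive law and cyclic associativity, then (a·b)·(c·c) = a·(b·(c·c)) for all a,b,c in S. -/
import Mathlib

theorem CA_AG_groupoid_is_right_nuclear_square {S : Type*} [Mul S]
    (li : ∀ a b c : S, (a * b) * c = (c * b) * a)
    (ca : ∀ a b c : S, a * (b * c) = c * (a * b)) :
    ∀ a b c : S, (a * b) * (c * c) = a * (b * (c * c)) := by
  intro a b c
  calc (a * b) * (c * c) = c * ((a * b) * c) := ca _ _ _
    _ = c * ((c * b) * a) := by rw [li a b c]
    _ = a * (c * (c * b)) := ca _ _ _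
    _ = a * (b * (c * c)) := by rw [ca c c b]
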